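/- Let (g, t) be a construction with split ((g′, t), ics). Writing CTS(g′, t) = [tr1,…,trn] and ics = [ic(tr1),…,ic(trn)], it holds that CTS(g, t) = (CTS(ic(tr1)) ◁ tr1) ⊕ ⋯ ⊕ (CTS(ic(trn)) ◁ trn). -/

import Mathlib

namespace RST

/-! ## Type systems -/

/-- A relation (given as a set of pairs) is a partial order on the set `Ty`. -/
def IsPartialOrderOn {U : Type*} (Ty : Set U) (le : Set (U × U)) : Prop :=
  (∀ p ∈ le, p.1 ∈ Ty ∧ p.2 ∈ Ty) ∧
  (∀ τ ∈ Ty, (τ, τ) ∈ le) ∧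
  (∀ a b : U, (a, b) ∈ le → (b, a) ∈ le → a = b) ∧
  (∀ a b c : U, (a, b) ∈ le → (b, c) ∈ le → (a, c) ∈ le)

/-- The subtype closure of `Ty'` in the type system `(Ty, le)`. -/
def subtypeClosure {U : Type*} (Ty : Set U) (le : Set (U × U)) (Ty' : Set U) : Set U :=
  {τ | τ ∈ Ty ∧ ∃ τ' ∈ Ty', (τ, τ') ∈ le}

/-- The set of all subtype closures of subsets of `Ty`. -/
def SC {U : Type*} (Ty : Set U) (le : Set (U × U)) : Set (Set U) :=
  {S | ∃ Ty' ⊆ Ty, S = subtypeClosure Ty le Ty'}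

/-- The candidate order of an upper bound extension: the reflexive closure (on `Ty ∪ Tystar`)
of `le` together with the pairs `(τ, f S)` for `τ ∈ S ∈ SC Ty le`. -/
def upperBoundRel {U : Type*} (Ty Tystar : Set U) (le : Set (U × U)) (f : Set U → U) :
    Set (U × U) :=
  (le ∪ {p : U × U | ∃ S ∈ SC Ty le, p.1 ∈ S ∧ p.2 = f S}) ∪
    {p : U × U | p.1 = p.2 ∧ p.1 ∈ Ty ∪ Tystar}

/-! ## Graphs -/

/-- A (raw) directed labelled bipartite graph: tokens `Tk`, configurators `Cf`, arrows `Arr`,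
incidence, arrow indices and vertex labels all given relationally (as sets of pairs), so that
unions of graphs are componentwise unions. -/
structure PreGraph (V A L : Type*) where
  Tk : Set V
  Cf : Set V
  Arr : Set A
  inc : Set (A × (V × V))
  ia : Set (A × ℕ)
  tl : Set (V × L)
  cl : Set (V × L)

variable {V A L : Type*}

instance : Union (PreGraph V A L) :=
  ⟨fun g h =>
    ⟨g.Tk ∪ h.Tk, g.Cf ∪ h.Cf, g.Arr ∪ h.Arr, g.inc ∪ h.inc, g.ia ∪ h.ia,
      g.tl ∪ h.tl, g.cl ∪ h.cl⟩⟩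

def PreGraph.Subgraph (h g : PreGraph V A L) : Prop :=
  h.Tk ⊆ g.Tk ∧ h.Cf ⊆ g.Cf ∧ h.Arr ⊆ g.Arr ∧ h.inc ⊆ g.inc ∧ h.ia ⊆ g.ia ∧
    h.tl ⊆ g.tl ∧ h.cl ⊆ g.cl

/-- The vertices adjacent to `u` (together with `u`). -/
def PreGraph.adjTo (g : PreGraph V A L) (u : V) : Set V :=
  {u} ∪ {v | ∃ a ∈ g.Arr, (a, (v, u)) ∈ g.inc ∨ (a, (u, v)) ∈ g.inc}

/-- The arrows incident to `u`. -/
def PreGraph.incidentArrows (g : PreGraph V A L) (u : V) : Set A :=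
  {a | a ∈ g.Arr ∧ ∃ v, (a, (v, u)) ∈ g.inc ∨ (a, (u, v)) ∈ g.inc}

/-- The restriction of a graph to given vertex and arrow sets. -/
def PreGraph.restrict (g : PreGraph V A L) (Vs : Set V) (As : Set A) : PreGraph V A L :=
  ⟨g.Tk ∩ Vs, g.Cf ∩ Vs, g.Arr ∩ As, {q | q ∈ g.inc ∧ q.1 ∈ As},
    {q | q ∈ g.ia ∧ q.1 ∈ As}, {q | q ∈ g.tl ∧ q.1 ∈ Vs}, {q | q ∈ g.cl ∧ q.1 ∈ Vs}⟩

/-- The neighbourhood of a vertex `u`. -/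
def PreGraph.Nh (g : PreGraph V A L) (u : V) : PreGraph V A L :=
  g.restrict (g.adjTo u) (g.incidentArrows u)

/-- A set of pairs is (the graph of) a function with domain `D`. -/
def IsFunctionOn {α β : Type*} (R : Set (α × β)) (D : Set α) : Prop :=
  (∀ p ∈ R, p.1 ∈ D) ∧ ∀ x ∈ D, ∃! y, (x, y) ∈ R

/-- A raw graph is a genuine directed labelled bipartite graph. -/
def IsGraph (g : PreGraph V A L) : Prop :=
  Disjoint g.Tk g.Cf ∧
  IsFunctionOn g.inc g.Arr ∧
  (∀ a v w, (a, (v, w)) ∈ g.inc → (v ∈ g.Tk ∧ w ∈ g.Cf) ∨ (v ∈ g.Cf ∧ w ∈ g.Tk)) ∧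
  IsFunctionOn g.ia g.Arr ∧ IsFunctionOn g.tl g.Tk ∧ IsFunctionOn g.cl g.Cf

/-- `ars` is the list of incoming arrows of `u`, listed in increasing index order
(the arrow at position `i` carries index `i+1`). -/
def InArrowSeq (g : PreGraph V A L) (u : V) (ars : List A) : Prop :=
  ars.Nodup ∧ (∀ a : A, a ∈ ars ↔ a ∈ g.Arr ∧ ∃ w, (a, (w, u)) ∈ g.inc) ∧
  ∀ (i : ℕ) (a : A), ars[i]? = some a → (a, i + 1) ∈ g.ia

/-- `t` is an output token of the configurator `u`. -/
def OutputTok (g : PreGraph V A L) (u t : V) : Prop :=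
  ∃ a ∈ g.Arr, (a, (u, t)) ∈ g.inc

/-- `ts` is the input token-sequence of the configurator `u`. -/
def InputTokSeq (g : PreGraph V A L) (u : V) (ts : List V) : Prop :=
  ∃ ars : List A, InArrowSeq g u ars ∧
    List.Forall₂ (fun a v => (a, (v, u)) ∈ g.inc) ars ts

/-- `τs` is the input type-sequence of the configurator `u`. -/
def InputTypeSeq (g : PreGraph V A L) (u : V) (τs : List L) : Prop :=
  ∃ ts : List V, InputTokSeq g u ts ∧ List.Forall₂ (fun v τ => (v, τ) ∈ g.tl) ts τs

/-- `g` is a configuration of the constructor `c` (with signature `(ins, out)`),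
whose single configurator is `u`. -/
def IsConfiguration (le : Set (L × L)) (g : PreGraph V A L) (u : V) (c : L)
    (ins : List L) (out : L) : Prop :=
  IsGraph g ∧ g.Cf = {u} ∧ (u, c) ∈ g.cl ∧
  g.Tk = {v | ∃ a ∈ g.Arr, (a, (v, u)) ∈ g.inc ∨ (a, (u, v)) ∈ g.inc} ∧
  (∃! a0 : A, a0 ∈ g.Arr ∧ ∃ w, (a0, (u, w)) ∈ g.inc) ∧
  (∀ a0 ∈ g.Arr, ∀ w : V, (a0, (u, w)) ∈ g.inc →
      (a0, 0) ∈ g.ia ∧ ∃ σ, (w, σ) ∈ g.tl ∧ (σ, out) ∈ le) ∧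
  (∃ ars : List A, InArrowSeq g u ars ∧ ars.length = ins.length ∧
    ∀ (i : ℕ) (a : A) (τ : L), ars[i]? = some a → ins[i]? = some τ →
      ∃ w σ, (a, (w, u)) ∈ g.inc ∧ (w, σ) ∈ g.tl ∧ (σ, τ) ∈ le)

/-- A structure graph for the constructor specification `(C, sig)` over types `(Ty, le)`. -/
def IsStructureGraph (Ty : Set L) (le : Set (L × L)) (C : Set L)
    (sig : Set (L × (List L × L))) (g : PreGraph V A L) : Prop :=
  IsGraph g ∧ (∀ x τ, (x, τ) ∈ g.tl → τ ∈ Ty) ∧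
  ∀ u ∈ g.Cf, ∃ c ins out, (u, c) ∈ g.cl ∧ c ∈ C ∧ (c, (ins, out)) ∈ sig ∧
    IsConfiguration le (g.Nh u) u c ins out

/-! ## Construction spaces -/

/-- The raw data of a construction space: a type system, a constructor specification and
a structure graph. -/
structure CSpace (V A L : Type*) where
  Ty : Set L
  le : Set (L × L)
  C : Set L
  sig : Set (L × (List L × L))
  G : PreGraph V A L

instance : Union (CSpace V A L) :=
  ⟨fun c d => ⟨c.Ty ∪ d.Ty, c.le ∪ d.le, c.C ∪ d.C, c.sig ∪ d.sig, c.G ∪ d.G⟩⟩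

/-- The raw data forms a genuine construction space. -/
def IsCSpace (Cs : CSpace V A L) : Prop :=
  IsPartialOrderOn Cs.Ty Cs.le ∧ Disjoint Cs.C Cs.Ty ∧ IsFunctionOn Cs.sig Cs.C ∧
  (∀ c ins out, (c, (ins, out)) ∈ Cs.sig →
      ins ≠ [] ∧ (∀ τ ∈ ins, τ ∈ Cs.Ty) ∧ out ∈ Cs.Ty) ∧
  IsStructureGraph Cs.Ty Cs.le Cs.C Cs.sig Cs.G

/-- Token-functionality of the constructors of a structure graph. -/
def TokenFunctional (g : PreGraph V A L) : Prop :=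
  ∀ u u' c, u ∈ g.Cf → u' ∈ g.Cf → (u, c) ∈ g.cl → (u', c) ∈ g.cl →
    ∀ ts, InputTokSeq g u ts → InputTokSeq g u' ts →
      ∀ t t', OutputTok g u t → OutputTok g u' t' → t = t'

/-- Type-functionality of the constructors of a structure graph. -/
def TypeFunctional (g : PreGraph V A L) : Prop :=
  ∀ u u' c, u ∈ g.Cf → u' ∈ g.Cf → (u, c) ∈ g.cl → (u', c) ∈ g.cl →
    ∀ τs, InputTypeSeq g u τs → InputTypeSeq g u' τs →
      ∀ t t' τ τ', OutputTok g u t → OutputTok g u' t' →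
        (t, τ) ∈ g.tl → (t', τ') ∈ g.tl → τ = τ'

def IsFunctionalGraph (g : PreGraph V A L) : Prop :=
  TokenFunctional g ∧ TypeFunctional g

/-! ## Representational systems -/

/-- The raw data of a representational system: grammatical, entailment and identification
spaces. -/
structure RSystem (V A L : Type*) where
  Gs : CSpace V A L
  Es : CSpace V A L
  Is : CSpace V A L

instance : Union (RSystem V A L) :=
  ⟨fun r s => ⟨r.Gs ∪ s.Gs, r.Es ∪ s.Es, r.Is ∪ s.Is⟩⟩

/-- The universal space of a representational system. -/
def RSystem.uspace (R : RSystem V A L) : CSpace V A L := (R.Gs ∪ R.Es) ∪ R.Is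

/-- `R` is a representational system formed over the type system `(Ty, le)` and the
meta-type system `(MTy, Mle)`. -/
def IsRSystem (R : RSystem V A L) (Ty : Set L) (le : Set (L × L))
    (MTy : Set L) (Mle : Set (L × L)) : Prop :=
  IsPartialOrderOn Ty le ∧ IsPartialOrderOn MTy Mle ∧
  IsPartialOrderOn (Ty ∪ MTy) (le ∪ Mle) ∧
  R.Gs.Ty = Ty ∧ R.Gs.le = le ∧ IsCSpace R.Gs ∧ IsFunctionalGraph R.Gs.G ∧
  R.Es.Ty = Ty ∧ R.Es.le = le ∧ IsCSpace R.Es ∧ R.Es.G.Tk ⊆ R.Gs.G.Tk ∧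
  R.Is.Ty = Ty ∪ MTy ∧ R.Is.le = le ∪ Mle ∧ IsCSpace R.Is ∧
  (∀ x ∈ R.Is.G.Tk, x ∉ R.Gs.G.Tk → ∃ τ ∈ MTy, (x, τ) ∈ R.Is.G.tl) ∧
  (∀ x ∈ R.Is.G.Tk, (∃ u ∈ R.Is.G.Cf, OutputTok R.Is.G u x) → x ∉ R.Gs.G.Tk) ∧
  IsCSpace (R.Gs ∪ R.Es) ∧ IsCSpace (R.Gs ∪ R.Is) ∧ IsCSpace (R.Es ∪ R.Is) ∧
  Disjoint R.Gs.C R.Es.C ∧ Disjoint R.Gs.C R.Is.C ∧ Disjoint R.Es.C R.Is.C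

/-- `(R, R', Is'')` is an inter-representational-system encoding, where `R` is formed over
`(Ty, le)` and `(MTy, Mle)`, `R'` over `(Ty', le')` and `(MTy', Mle')`, and `Is''` is an
identification space formed over `(Ty ∪ Ty', le ∪ le')` and `(MTy'', Mle'')`. -/
def IsIRSE (R R' : RSystem V A L) (Is'' : CSpace V A L)
    (Ty : Set L) (le : Set (L × L)) (MTy : Set L) (Mle : Set (L × L))
    (Ty' : Set L) (le' : Set (L × L)) (MTy' : Set L) (Mle' : Set (L × L))
    (MTy'' : Set L) (Mle'' : Set (L × L)) : Prop :=
  IsRSystem R Ty le MTy Mle ∧ IsRSystem R' Ty' le' MTy' Mle' ∧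
  IsRSystem (R ∪ R') (Ty ∪ Ty') (le ∪ le') (MTy ∪ MTy') (Mle ∪ Mle') ∧
  IsPartialOrderOn MTy'' Mle'' ∧
  IsPartialOrderOn ((Ty ∪ Ty') ∪ MTy'') ((le ∪ le') ∪ Mle'') ∧
  Is''.Ty = (Ty ∪ Ty') ∪ MTy'' ∧ Is''.le = (le ∪ le') ∪ Mle'' ∧ IsCSpace Is'' ∧
  MTy ∪ MTy' ⊆ MTy'' ∧ Mle ∪ Mle' ⊆ Mle'' ∧
  (∀ x ∈ Is''.G.Tk, x ∉ (R.Gs ∪ R'.Gs).G.Tk → ∃ τ ∈ MTy'', (x, τ) ∈ Is''.G.tl) ∧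
  (∀ x ∈ Is''.G.Tk, (∃ u ∈ Is''.G.Cf, OutputTok Is''.G u x) →
      x ∉ (R.Gs ∪ R'.Gs).G.Tk) ∧
  IsCSpace ((R.Gs ∪ R'.Gs) ∪ Is'') ∧ IsCSpace ((R.Es ∪ R'.Es) ∪ Is'') ∧
  IsCSpace ((R.Is ∪ R'.Is) ∪ Is'') ∧
  Disjoint Is''.C (R.Gs ∪ R'.Gs).C ∧ Disjoint Is''.C (R.Es ∪ R'.Es).C ∧
  Disjoint Is''.C (R.Is ∪ R'.Is).C

/-! ## Trails -/

/-- A trail candidate: a list of arrows together with an associated source and target vertex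
(needed for the empty trail `[]_v`). -/
structure Trail (V A : Type*) where
  arrows : List A
  src : V
  tgt : V

/-- The empty trail `[]_v`. -/
def Trail.nil {V A : Type*} (v : V) : Trail V A := ⟨[], v, v⟩

/-- Concatenation `e ⊕ w` of trails. -/
def Trail.append {V A : Type*} (e w : Trail V A) : Trail V A :=
  ⟨e.arrows ++ w.arrows, e.src, w.tgt⟩

/-- The image of a trail under vertex/arrow maps. -/
def Trail.map {V A : Type*} (fv : V → V) (fa : A → A) (tr : Trail V A) : Trail V A :=
  ⟨tr.arrows.map fa, fv tr.src, fv tr.tgt⟩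

/-- The arrows chain through the graph from `s` to `t`. -/
def ChainIn (g : PreGraph V A L) : List A → V → V → Prop
  | [], s, t => s = t
  | a :: rest, s, t => a ∈ g.Arr ∧ ∃ m, (a, (s, m)) ∈ g.inc ∧ ChainIn g rest m t

/-- `tr` is a trail in `g`. -/
def IsTrailIn (g : PreGraph V A L) (tr : Trail V A) : Prop :=
  tr.arrows.Nodup ∧ ChainIn g tr.arrows tr.src tr.tgt ∧
  tr.src ∈ g.Tk ∪ g.Cf ∧ tr.tgt ∈ g.Tk ∪ g.Cf

/-- A trail is well-formed provided its source and target are tokens. -/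
def WellFormed (g : PreGraph V A L) (tr : Trail V A) : Prop :=
  tr.src ∈ g.Tk ∧ tr.tgt ∈ g.Tk

/-- `tr` is (source-)extendable by the arrow `a`. -/
def ExtendableBy (g : PreGraph V A L) (tr : Trail V A) (a : A) : Prop :=
  a ∈ g.Arr ∧ a ∉ tr.arrows ∧ ∃ s, (a, (s, tr.src)) ∈ g.inc

def Extendable (g : PreGraph V A L) (tr : Trail V A) : Prop :=
  ∃ a, ExtendableBy g tr a

def NonExtendable (g : PreGraph V A L) (tr : Trail V A) : Prop :=
  ¬ Extendable g tr

/-- `TES g tr S` holds iff `S` is the trail extension sequence of the trail `tr` in `g`,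
following the recursive definition of TES. -/
inductive TES (g : PreGraph V A L) : Trail V A → List (Trail V A) → Prop where
  | nonext (tr : Trail V A) (h : NonExtendable g tr) :
      TES g tr [⟨[], tr.src, tr.src⟩]
  | ext (tr : Trail V A) (a : A) (u : V) (ars : List A)
      (Ss : List (List (Trail V A)))
      (hext : ExtendableBy g tr a)
      (hinc : (a, (u, tr.src)) ∈ g.inc)
      (hars : InArrowSeq g u ars)
      (hlen : Ss.length = ars.length)
      (hrec : ∀ (i : ℕ) (ai : A) (si : V) (Si : List (Trail V A)),
          ars[i]? = some ai → Ss[i]? = some Si → (ai, (si, u)) ∈ g.inc →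
          TES g ⟨ai :: a :: tr.arrows, si, tr.tgt⟩ Si) :
      TES g tr (List.flatten (List.zipWith
        (fun (ai : A) (Si : List (Trail V A)) =>
          Si.map (fun e => (⟨e.arrows ++ [ai, a], e.src, tr.src⟩ : Trail V A)))
        ars Ss))

/-- The sequence of sources of a sequence of trails. -/
def srcSeq {V A : Type*} (S : List (Trail V A)) : List V := S.map Trail.src

/-- The right product `S ◁ w`, appending the trail `w` to each trail in `S`. -/
def rprod {V A : Type*} (S : List (Trail V A)) (w : Trail V A) : List (Trail V A) :=
  S.map fun e => e.append w

/-! ## Constructions -/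

/-- Every token is the target of at most one arrow. -/
def UniStructured (g : PreGraph V A L) : Prop :=
  ∀ x ∈ g.Tk, ∀ a ∈ g.Arr, ∀ b ∈ g.Arr,
    (∃ w, (a, (w, x)) ∈ g.inc) → (∃ w, (b, (w, x)) ∈ g.inc) → a = b

/-- `(g, t)` is a construction in the construction space `Cs`: `g` is a finite uni-structured
structure graph (a subgraph of the structure graph of `Cs`), `t` is a token of `g`, and every
vertex of `g` is the source of a trail targeting `t`. -/
def IsConstruction (Cs : CSpace V A L) (g : PreGraph V A L) (t : V) : Prop :=
  g.Subgraph Cs.G ∧ IsStructureGraph Cs.Ty Cs.le Cs.C Cs.sig g ∧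
  g.Tk.Finite ∧ g.Cf.Finite ∧ g.Arr.Finite ∧ UniStructured g ∧ t ∈ g.Tk ∧
  ∀ v ∈ g.Tk ∪ g.Cf, ∃ tr : Trail V A, IsTrailIn g tr ∧ tr.src = v ∧ tr.tgt = t

/-- `(g, t)` is a construction *in* `Cs` in the strong sense: moreover every configurator of `g`
has its full neighbourhood from the structure graph of `Cs`. -/
def IsConstructionIn (Cs : CSpace V A L) (g : PreGraph V A L) (t : V) : Prop :=
  IsConstruction Cs g t ∧ ∀ u ∈ g.Cf, g.Nh u = Cs.G.Nh u

/-- A trivial construction: the construct is its only vertex. -/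
def TrivialC (g : PreGraph V A L) (t : V) : Prop := g.Tk ∪ g.Cf = {t}

/-- A basic construction: exactly one configurator. -/
def BasicC (g : PreGraph V A L) : Prop := ∃ u, g.Cf = {u}

/-- The set of arrows occurring in a sequence of trails. -/
def trailArrowSet {V A : Type*} (TR : List (Trail V A)) : Set A :=
  {a | ∃ tr ∈ TR, a ∈ tr.arrows}

/-- The vertices of the `TR`-graph: vertices incident to arrows of trails of `TR`,
together with the associated vertex of any empty trail of `TR`. -/
def trailVertexSet (g : PreGraph V A L) (TR : List (Trail V A)) : Set V :=
  {v | (∃ a ∈ trailArrowSet TR, ∃ w, (a, (v, w)) ∈ g.inc ∨ (a, (w, v)) ∈ g.inc) ∨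
    ∃ tr ∈ TR, tr.arrows = [] ∧ tr.src = v}

/-- The `TR`-graph `v(TR)`. -/
def trGraph (g : PreGraph V A L) (TR : List (Trail V A)) : PreGraph V A L :=
  g.restrict (trailVertexSet g TR) (trailArrowSet TR)

/-- `((g', t), ics)` is a split of the construction `(g, t)`: `(g', t)` is a generator and
`ics` is the corresponding induced construction sequence (each induced construction is
`(v(TES(tri)), source(tri))`, the TES being computed in `(g, t)`). -/
def IsSplit (Cs : CSpace V A L) (g : PreGraph V A L) (t : V)
    (g' : PreGraph V A L) (ics : List (PreGraph V A L × V)) : Prop :=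
  IsConstruction Cs g' t ∧ g'.Subgraph g ∧
  ∃ trs : List (Trail V A), TES g' (Trail.nil t) trs ∧ ics.length = trs.length ∧
    ∀ (i : ℕ) (tri : Trail V A), trs[i]? = some tri →
      ∃ Si : List (Trail V A), TES g tri Si ∧ ics[i]? = some (trGraph g Si, tri.src)

/-! ## Decompositions -/

/-- A decomposition tree: vertices labelled by a graph and a token, with the incoming arrows
of every vertex given in index order by a list of subtrees. -/
inductive DTree (V A L : Type*) where
  | node : PreGraph V A L → V → List (DTree V A L) → DTree V A L

def DTree.rootGraph : DTree V A L → PreGraph V A L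
  | .node g _ _ => g

def DTree.rootTok : DTree V A L → V
  | .node _ t _ => t

def DTree.kids : DTree V A L → List (DTree V A L)
  | .node _ _ cs => cs

/-- `IsDecompositionOf Cs D g t` holds iff `D` is a decomposition of the construction
`(g, t)` in `Cs`. -/
inductive IsDecompositionOf (Cs : CSpace V A L) : DTree V A L → PreGraph V A L → V → Prop where
  | single (g : PreGraph V A L) (t : V) (h : IsConstruction Cs g t) :
      IsDecompositionOf Cs (.node g t []) g t
  | split (g : PreGraph V A L) (t : V) (g' : PreGraph V A L)
      (ics : List (PreGraph V A L × V)) (cs : List (DTree V A L))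
      (hc : IsConstruction Cs g t)
      (hsplit : IsSplit Cs g t g' ics)
      (hlen : cs.length = ics.length)
      (hrec : ∀ (i : ℕ) (ci : DTree V A L) (gi : PreGraph V A L) (ti : V),
          cs[i]? = some ci → ics[i]? = some (gi, ti) → IsDecompositionOf Cs ci gi ti) :
      IsDecompositionOf Cs (.node g' t cs) g t

/-- `LcsRel D ls` holds iff `ls` is the leaf construction-sequence of `D`. -/
inductive LcsRel : DTree V A L → List (PreGraph V A L × V) → Prop where
  | leaf (g : PreGraph V A L) (t : V) : LcsRel (.node g t []) [(g, t)]
  | node (g : PreGraph V A L) (t : V) (cs : List (DTree V A L))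
      (ls : List (List (PreGraph V A L × V)))
      (hne : cs ≠ []) (hlen : ls.length = cs.length)
      (h : ∀ (i : ℕ) (ci : DTree V A L) (li : List (PreGraph V A L × V)),
          cs[i]? = some ci → ls[i]? = some li → LcsRel ci li) :
      LcsRel (.node g t cs) ls.flatten

/-- `(p, w)` is one of the constructions labelling a vertex of the decomposition tree. -/
inductive LabelOf : DTree V A L → PreGraph V A L → V → Prop where
  | root (g : PreGraph V A L) (t : V) (cs : List (DTree V A L)) :
      LabelOf (.node g t cs) g t
  | child (g : PreGraph V A L) (t : V) (cs : List (DTree V A L))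
      (c : DTree V A L) (p : PreGraph V A L) (w : V) :
      c ∈ cs → LabelOf c p w → LabelOf (.node g t cs) p w

/-- The union of all the graphs labelling vertices of the decomposition tree
(the graph of the construction `ct(D)` of the decomposition `D`). -/
def DTree.ctGraph (D : DTree V A L) : PreGraph V A L :=
  ⟨{x | ∃ p w, LabelOf D p w ∧ x ∈ p.Tk},
   {x | ∃ p w, LabelOf D p w ∧ x ∈ p.Cf},
   {a | ∃ p w, LabelOf D p w ∧ a ∈ p.Arr},
   {q | ∃ p w, LabelOf D p w ∧ q ∈ p.inc},
   {q | ∃ p w, LabelOf D p w ∧ q ∈ p.ia},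
   {q | ∃ p w, LabelOf D p w ∧ q ∈ p.tl},
   {q | ∃ p w, LabelOf D p w ∧ q ∈ p.cl}⟩

/-- Every vertex label of the decomposition tree satisfies `P`. -/
inductive AllLabels (P : PreGraph V A L → V → Prop) : DTree V A L → Prop where
  | node (g : PreGraph V A L) (t : V) (cs : List (DTree V A L)) :
      P g t → (∀ c, c ∈ cs → AllLabels P c) → AllLabels P (.node g t cs)

/-- The subtree of a decomposition tree at a given position (a path of child indices). -/
def subtreeAt : List ℕ → DTree V A L → Option (DTree V A L)
  | [], D => some D
  | i :: rest, .node _ _ cs =>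
    match cs[i]? with
    | some c => subtreeAt rest c
    | none => none

/-! ## Patterns and embeddings -/

/-- An embedding of the graph `g` into the graph `p`: an isomorphism preserving arrow indices
and configurator labels, with token labels respecting the subtype relation `le`. -/
def IsEmbedding (le : Set (L × L)) (g p : PreGraph V A L) (fv : V → V) (fa : A → A) : Prop :=
  (∀ x ∈ g.Tk, fv x ∈ p.Tk) ∧ (∀ x ∈ g.Cf, fv x ∈ p.Cf) ∧
  (∀ x ∈ g.Tk ∪ g.Cf, ∀ y ∈ g.Tk ∪ g.Cf, fv x = fv y → x = y) ∧
  (∀ y ∈ p.Tk, ∃ x ∈ g.Tk, fv x = y) ∧ (∀ y ∈ p.Cf, ∃ x ∈ g.Cf, fv x = y) ∧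
  (∀ a ∈ g.Arr, fa a ∈ p.Arr) ∧
  (∀ a ∈ g.Arr, ∀ b ∈ g.Arr, fa a = fa b → a = b) ∧
  (∀ b ∈ p.Arr, ∃ a ∈ g.Arr, fa a = b) ∧
  (∀ a v w, (a, (v, w)) ∈ g.inc → (fa a, (fv v, fv w)) ∈ p.inc) ∧
  (∀ a n, (a, n) ∈ g.ia → (fa a, n) ∈ p.ia) ∧
  (∀ u c, (u, c) ∈ g.cl → (fv u, c) ∈ p.cl) ∧
  (∀ x τ, (x, τ) ∈ g.tl → ∃ σ, (fv x, σ) ∈ p.tl ∧ (τ, σ) ∈ le)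

/-- The construction `(g, t)` matches the pattern `(p, v)`. -/
def MatchesPattern (le : Set (L × L)) (g : PreGraph V A L) (t : V)
    (p : PreGraph V A L) (v : V) : Prop :=
  ∃ fv fa, IsEmbedding le g p fv fa ∧ fv t = v

/-- `Ps` is a pattern space for `Cs`: a construction space over the same type system and
constructor specification such that every construction of `Cs` matches some construction
of `Ps`. -/
def IsPatternSpace (Cs Ps : CSpace V A L) : Prop :=
  Ps.Ty = Cs.Ty ∧ Ps.le = Cs.le ∧ Ps.C = Cs.C ∧ Ps.sig = Cs.sig ∧ IsCSpace Ps ∧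
  ∀ g t, IsConstruction Cs g t →
    ∃ p v, IsConstruction Ps p v ∧ MatchesPattern Cs.le g t p v

/-- Vertex-wise matching of two same-shape decomposition trees under a common pair of maps. -/
inductive DMatches (le : Set (L × L)) (fv : V → V) (fa : A → A) :
    DTree V A L → DTree V A L → Prop where
  | node (g : PreGraph V A L) (t : V) (p : PreGraph V A L) (v : V)
      (cs ds : List (DTree V A L))
      (hemb : IsEmbedding le g p fv fa) (ht : fv t = v)
      (hlen : cs.length = ds.length)
      (hrec : ∀ (i : ℕ) (ci di : DTree V A L), cs[i]? = some ci → ds[i]? = some di →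
          DMatches le fv fa ci di) :
      DMatches le fv fa (.node g t cs) (.node p v ds)

/-- The decomposition `D` matches the (pattern) decomposition `Δ`: there is an arrow-index
preserving isomorphism of trees together with an embedding of `ct(D)` into `ct(Δ)` whose
restriction to each vertex label is an embedding into the corresponding pattern label. -/
def DecompositionMatches (le : Set (L × L)) (D Δ : DTree V A L) : Prop :=
  ∃ fv fa, IsEmbedding le D.ctGraph Δ.ctGraph fv fa ∧ fv D.rootTok = Δ.rootTok ∧
    DMatches le fv fa D Δ

/-! ## Descriptions -/

/-- A description: a set of decompositions of patterns (constructions in the pattern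
space `Ps`). -/
def IsDescriptionOf (Ps : CSpace V A L) (Ds : Set (DTree V A L)) : Prop :=
  ∀ Δ ∈ Ds, ∃ p v, IsConstruction Ps p v ∧ IsDecompositionOf Ps Δ p v

/-- The description `Ds` is complete for `Cs`. -/
def CompleteDescription (Cs : CSpace V A L) (Ds : Set (DTree V A L)) : Prop :=
  ∀ g t, IsConstruction Cs g t →
    ∃ Δ ∈ Ds, ∃ D, IsDecompositionOf Cs D g t ∧ DecompositionMatches Cs.le D Δ

/-- The set of patterns labelling vertices of decompositions in `Ds`. -/
def PatternsOf (Ds : Set (DTree V A L)) : Set (PreGraph V A L × V) :=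
  {pv | ∃ Δ ∈ Ds, LabelOf Δ pv.1 pv.2}

/-- Label-preserving isomorphism of patterns/constructions. -/
def LabelIsomorphic (g : PreGraph V A L) (t : V) (p : PreGraph V A L) (v : V) : Prop :=
  ∃ fv fa, IsEmbedding {q : L × L | q.1 = q.2} g p fv fa ∧ fv t = v

/-- The description `Ds` is compact: finitely many patterns up to label-preserving
isomorphism. -/
def CompactDescription (Ds : Set (DTree V A L)) : Prop :=
  ∃ Reps : Set (PreGraph V A L × V), Reps.Finite ∧
    ∀ pv ∈ PatternsOf Ds, ∃ qw ∈ Reps, LabelIsomorphic pv.1 pv.2 qw.1 qw.2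

/-! ## Transformation constraints and structural transformations -/

/-- A transformation-constraint-shaped triple: two patterns (or constructions) together with
a set of patterns (or constructions). -/
structure TConstraint (V A L : Type*) where
  pa : PreGraph V A L
  ca : V
  pb : PreGraph V A L
  cb : V
  Pc : Set (PreGraph V A L × V)

/-- The union of the graphs of a set of patterns. -/
def pGraph (P : Set (PreGraph V A L × V)) : PreGraph V A L :=
  ⟨{x | ∃ pv ∈ P, x ∈ pv.1.Tk}, {x | ∃ pv ∈ P, x ∈ pv.1.Cf},
   {a | ∃ pv ∈ P, a ∈ pv.1.Arr}, {q | ∃ pv ∈ P, q ∈ pv.1.inc},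
   {q | ∃ pv ∈ P, q ∈ pv.1.ia}, {q | ∃ pv ∈ P, q ∈ pv.1.tl},
   {q | ∃ pv ∈ P, q ∈ pv.1.cl}⟩

/-- A respectful embedding of the set of patterns `P` into the set of patterns `P'`. -/
def RespectfulEmbedding (le : Set (L × L)) (P P' : Set (PreGraph V A L × V))
    (fv : V → V) (fa : A → A) : Prop :=
  IsEmbedding le (pGraph P) (pGraph P') fv fa ∧
  ∀ pv ∈ P, ∃ qw ∈ P', IsEmbedding le pv.1 qw.1 fv fa ∧ fv pv.2 = qw.2

/-- Satisfaction of one transformation-constraint-shaped triple by another: embeddings of the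
first two components, a respectful embedding of the third, whose common underlying maps give
an isomorphism of the unions of the graphs. -/
def TCSatisfies (le : Set (L × L)) (s s' : TConstraint V A L) : Prop :=
  ∃ fv fa,
    IsEmbedding le s.pa s'.pa fv fa ∧ fv s.ca = s'.ca ∧
    IsEmbedding le s.pb s'.pb fv fa ∧ fv s.cb = s'.cb ∧
    RespectfulEmbedding le s.Pc s'.Pc fv fa ∧
    IsEmbedding le ((s.pa ∪ s.pb) ∪ pGraph s.Pc) ((s'.pa ∪ s'.pb) ∪ pGraph s'.Pc) fv fa

/-- A transformation constraint for an encoding described by `(Ds, Ds', P'')`. -/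
def IsTransformationConstraint (Ds Ds' : Set (DTree V A L))
    (P'' : Set (PreGraph V A L × V)) (s : TConstraint V A L) : Prop :=
  (s.pa, s.ca) ∈ PatternsOf Ds ∧ (s.pb, s.cb) ∈ PatternsOf Ds' ∧ s.Pc ⊆ P''

/-- A constraint assignment for `Δ` and `Δ'`: a partial function (modelled with `Option`) on
pairs of vertices (paths) whose values are transformation constraints from `S0` matched by the
corresponding labels. -/
def IsConstraintAssignment (leR leR' : Set (L × L)) (S0 : Set (TConstraint V A L))
    (Δ Δ' : DTree V A L) (Lm : List ℕ → List ℕ → Option (TConstraint V A L)) : Prop :=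
  ∀ pi pi' s, Lm pi pi' = some s → s ∈ S0 ∧
    (∃ δ, subtreeAt pi Δ = some δ ∧
        MatchesPattern leR δ.rootGraph δ.rootTok s.pa s.ca) ∧
    (∃ δ', subtreeAt pi' Δ' = some δ' ∧
        MatchesPattern leR' δ'.rootGraph δ'.rootTok s.pb s.cb)

/-- The constraint assignment `Lm` is satisfied by the pair of decompositions `(D, D')`
(whose vertices correspond, via the shape-preserving matchings, to those of `Δ`, `Δ'`). -/
def LSatisfiedBy (leI : Set (L × L)) (Ip : CSpace V A L)
    (Lm : List ℕ → List ℕ → Option (TConstraint V A L)) (D D' : DTree V A L) : Prop :=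
  ∀ pi pi' s d d', Lm pi pi' = some s →
    subtreeAt pi D = some d → subtreeAt pi' D' = some d' →
    ∃ Cset : Set (PreGraph V A L × V),
      (∀ pv ∈ Cset, IsConstruction Ip pv.1 pv.2) ∧
      TCSatisfies leI ⟨d.rootGraph, d.rootTok, d'.rootGraph, d'.rootTok, Cset⟩ s

/-- `(g', t')` is a structural `L`-transformation of `(g, t)` (with respect to the pattern
decompositions `Δ`, `Δ'` for the universal spaces `Ru`, `Ru'` and the inter-property
identification space `Ip`). -/
def IsStructuralLTransformation (Ru Ru' Ip : CSpace V A L) (Δ Δ' : DTree V A L)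
    (Lm : List ℕ → List ℕ → Option (TConstraint V A L))
    (g : PreGraph V A L) (t : V) (g' : PreGraph V A L) (t' : V) : Prop :=
  (∃ D, IsDecompositionOf Ru D g t ∧ DecompositionMatches Ru.le D Δ) ∧
  (∃ D', IsDecompositionOf Ru' D' g' t' ∧ DecompositionMatches Ru'.le D' Δ') ∧
  ∀ D D', IsDecompositionOf Ru D g t → DecompositionMatches Ru.le D Δ →
    IsDecompositionOf Ru' D' g' t' → DecompositionMatches Ru'.le D' Δ' →
    LSatisfiedBy Ip.le Ip Lm D D'

/-- Partial satisfaction: the constraint is only checked at vertices of the pattern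
decomposition `Δh` whose label is already a construction in `Ru'`. -/
def LPartialSatisfiedBy (leI : Set (L × L)) (Ip Ru' : CSpace V A L)
    (Lm : List ℕ → List ℕ → Option (TConstraint V A L)) (D Δh : DTree V A L) : Prop :=
  ∀ pi pi' s d δh, Lm pi pi' = some s →
    subtreeAt pi D = some d → subtreeAt pi' Δh = some δh →
    IsConstructionIn Ru' δh.rootGraph δh.rootTok →
    ∃ Cset : Set (PreGraph V A L × V),
      (∀ pv ∈ Cset, IsConstruction Ip pv.1 pv.2) ∧
      TCSatisfies leI ⟨d.rootGraph, d.rootTok, δh.rootGraph, δh.rootTok, Cset⟩ s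

/-- The pattern `(ph, vh)` (a construction in the pattern space `Ps'` for `Ru'`) is a partial
`L`-transformation of the construction `(g, t)`. -/
def IsPartialLTransformation (Ru Ru' Ip Ps' : CSpace V A L) (Δ Δ' : DTree V A L)
    (Lm : List ℕ → List ℕ → Option (TConstraint V A L))
    (g : PreGraph V A L) (t : V) (ph : PreGraph V A L) (vh : V) : Prop :=
  (∃ D, IsDecompositionOf Ru D g t ∧ DecompositionMatches Ru.le D Δ) ∧
  (∃ Δh, IsDecompositionOf Ps' Δh ph vh ∧ DecompositionMatches Ru'.le Δh Δ') ∧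
  ∀ D Δh, IsDecompositionOf Ru D g t → DecompositionMatches Ru.le D Δ →
    IsDecompositionOf Ps' Δh ph vh → DecompositionMatches Ru'.le Δh Δ' →
    LPartialSatisfiedBy Ip.le Ip Ru' Lm D Δh

/-! ## Validity, soundness, leaf instantiation -/

/-- Validity of `Lm` for `(g, t)` and `(p, v)` at the pair of vertices `(pi, pi')`. -/
def ValidAt (Ru Ru' Ip Ps' : CSpace V A L) (Δ Δ' : DTree V A L)
    (Lm : List ℕ → List ℕ → Option (TConstraint V A L))
    (g : PreGraph V A L) (t : V) (p : PreGraph V A L) (v : V)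
    (pi pi' : List ℕ) : Prop :=
  ∀ D Δh Dsub Δhsub Δsub Δsub',
    IsDecompositionOf Ru D g t → DecompositionMatches Ru.le D Δ →
    IsDecompositionOf Ps' Δh p v → DecompositionMatches Ru'.le Δh Δ' →
    subtreeAt pi D = some Dsub → subtreeAt pi' Δh = some Δhsub →
    subtreeAt pi Δ = some Δsub → subtreeAt pi' Δ' = some Δsub' →
    IsConstructionIn Ru' Δhsub.ctGraph Δhsub.rootTok →
    IsStructuralLTransformation Ru Ru' Ip Δsub Δsub'
      (fun σ σ' => Lm (pi ++ σ) (pi' ++ σ'))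
      Dsub.ctGraph Dsub.rootTok Δhsub.ctGraph Δhsub.rootTok

/-- Ancestor-validity: validity at every pair of proper descendants-in-the-tree
("ancestors" in the paper's in-tree terminology). -/
def AncestorValidAt (Ru Ru' Ip Ps' : CSpace V A L) (Δ Δ' : DTree V A L)
    (Lm : List ℕ → List ℕ → Option (TConstraint V A L))
    (g : PreGraph V A L) (t : V) (p : PreGraph V A L) (v : V)
    (pi pi' : List ℕ) : Prop :=
  ∀ σ σ' : List ℕ, σ ≠ [] → σ' ≠ [] →
    (∃ d, subtreeAt (pi ++ σ) Δ = some d) → (∃ d', subtreeAt (pi' ++ σ') Δ' = some d') →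
    ValidAt Ru Ru' Ip Ps' Δ Δ' Lm g t p v (pi ++ σ) (pi' ++ σ')

/-- Soundness of a constraint assignment. -/
def SoundAssignment (Ru Ru' Ip Ps' : CSpace V A L) (Δ Δ' : DTree V A L)
    (Lm : List ℕ → List ℕ → Option (TConstraint V A L)) : Prop :=
  ∀ g t, IsConstructionIn Ru g t →
    (∃ D, IsDecompositionOf Ru D g t ∧ DecompositionMatches Ru.le D Δ) →
    ∀ p v, IsConstruction Ps' p v →
      (∃ Δh, IsDecompositionOf Ps' Δh p v ∧ DecompositionMatches Ru'.le Δh Δ') →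
      ∀ pi pi', (∃ d, subtreeAt pi Δ = some d) → (∃ d', subtreeAt pi' Δ' = some d') →
        AncestorValidAt Ru Ru' Ip Ps' Δ Δ' Lm g t p v pi pi' →
        ValidAt Ru Ru' Ip Ps' Δ Δ' Lm g t p v pi pi'

/-- The pattern `(p, v)` leaf-instantiates `Δ'`: it matches `Δ'` and every leaf of its
`Δ'`-canonical decomposition is labelled by a construction in `Ru'`. -/
def LeafInstantiates (Ru' Ps' : CSpace V A L) (Δ' : DTree V A L)
    (p : PreGraph V A L) (v : V) : Prop :=
  (∃ Δh, IsDecompositionOf Ps' Δh p v ∧ DecompositionMatches Ru'.le Δh Δ') ∧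
  ∀ Δh, IsDecompositionOf Ps' Δh p v → DecompositionMatches Ru'.le Δh Δ' →
    ∀ pi δh, subtreeAt pi Δh = some δh → δh.kids = [] →
      IsConstructionIn Ru' δh.rootGraph δh.rootTok

/-- A complete extension of a pattern `(p, v)` that leaf-instantiates `Δ'`. -/
def CompleteExtension (Ru' Ps' : CSpace V A L) (Δ' : DTree V A L)
    (p : PreGraph V A L) (v : V) (g' : PreGraph V A L) (t' : V) : Prop :=
  IsConstructionIn Ru' g' t' ∧
  ∃ fv fa, IsEmbedding Ru'.le g' p fv fa ∧ fv t' = v ∧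
    ∀ Δh, IsDecompositionOf Ps' Δh p v → DecompositionMatches Ru'.le Δh Δ' →
      ∀ pi δh, subtreeAt pi Δh = some δh → δh.kids = [] →
        ∀ x ∈ δh.rootGraph.Tk, x ∈ g'.Tk ∧ fv x = x

/-- `(g, t)` and `(p, v)` are valid at the leaves of `Δ` and `Δ'`. -/
def ValidAtLeaves (Ru Ru' Ip Ps' : CSpace V A L) (Δ Δ' : DTree V A L)
    (Lm : List ℕ → List ℕ → Option (TConstraint V A L))
    (g : PreGraph V A L) (t : V) (p : PreGraph V A L) (v : V) : Prop :=
  ∀ pi pi' δ δ', subtreeAt pi Δ = some δ → subtreeAt pi' Δ' = some δ' →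
    δ.kids = [] → δ'.kids = [] →
    ValidAt Ru Ru' Ip Ps' Δ Δ' Lm g t p v pi pi'


/-! ### Auxiliary lemmas for Statement 8 -/

section Aux

variable {V A L : Type*}

/-! #### list helpers -/

lemma forall₂_append_split {α β : Type*} {R : α → β → Prop} :
    ∀ {l₁ l₂ : List α} {m : List β}, List.Forall₂ R (l₁ ++ l₂) m →
      ∃ m₁ m₂, m = m₁ ++ m₂ ∧ List.Forall₂ R l₁ m₁ ∧ List.Forall₂ R l₂ m₂ := by
  intro l₁
  induction l₁ with
  | nil => intro l₂ m h; exact ⟨[], m, rfl, List.Forall₂.nil, h⟩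
  | cons a l₁ ih =>
    intro l₂ m h
    cases h with
    | cons hab h =>
      rename_i b m'
      obtain ⟨m₁, m₂, rfl, h₁, h₂⟩ := ih h
      exact ⟨b :: m₁, m₂, rfl, List.Forall₂.cons hab h₁, h₂⟩

lemma forall₂_flatten_split {α β : Type*} {R : α → β → Prop} :
    ∀ {Bs : List (List α)} {m : List β}, List.Forall₂ R Bs.flatten m →
      ∃ ms : List (List β), m = ms.flatten ∧ List.Forall₂ (List.Forall₂ R) Bs ms := by
  intro Bs
  induction Bs with
  | nil =>
    intro m h
    rw [List.flatten_nil] at h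
    rcases List.forall₂_nil_left_iff.1 h with rfl
    exact ⟨[], rfl, List.Forall₂.nil⟩
  | cons B Bs ih =>
    intro m h
    rw [List.flatten_cons] at h
    obtain ⟨m₁, m₂, rfl, h₁, h₂⟩ := forall₂_append_split h
    obtain ⟨ms, rfl, hms⟩ := ih h₂
    exact ⟨m₁ :: ms, by simp, List.Forall₂.cons h₁ hms⟩

lemma forall₂_getElem? {α β : Type*} {R : α → β → Prop} {l : List α} {m : List β}
    (h : List.Forall₂ R l m) {i : ℕ} {x : α} {y : β}
    (hx : l[i]? = some x) (hy : m[i]? = some y) : R x y := by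
  induction h generalizing i with
  | nil => simp at hx
  | cons hab h ih =>
    cases i with
    | zero => simp_all
    | succ i => exact ih (by simpa using hx) (by simpa using hy)

lemma forall₂_of_getElem? {α β : Type*} {R : α → β → Prop} {l : List α} {m : List β}
    (hlen : l.length = m.length)
    (h : ∀ (i : ℕ) (x : α) (y : β), l[i]? = some x → m[i]? = some y → R x y) :
    List.Forall₂ R l m := by
  rw [List.forall₂_iff_get]
  refine ⟨hlen, fun i h₁ h₂ => h i _ _ ?_ ?_⟩
  · simp [List.getElem?_eq_getElem h₁]
  · simp [List.getElem?_eq_getElem h₂]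

lemma getElem?_zipWith_some {α β γ : Type*} {f : α → β → γ} {l₁ : List α} {l₂ : List β}
    {i : ℕ} {c : γ} (h : (List.zipWith f l₁ l₂)[i]? = some c) :
    ∃ a b, l₁[i]? = some a ∧ l₂[i]? = some b ∧ c = f a b := by
  rw [List.getElem?_zipWith] at h
  cases h₁ : l₁[i]? with
  | none => rw [h₁] at h; simp at h
  | some a =>
    cases h₂ : l₂[i]? with
    | none => rw [h₁, h₂] at h; simp at h
    | some b =>
      rw [h₁, h₂] at h
      exact ⟨a, b, rfl, rfl, by simpa using h.symm⟩

lemma getElem?_zipWith_of {α β γ : Type*} {f : α → β → γ} {l₁ : List α} {l₂ : List β}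
    {i : ℕ} {a : α} {b : β} (h₁ : l₁[i]? = some a) (h₂ : l₂[i]? = some b) :
    (List.zipWith f l₁ l₂)[i]? = some (f a b) := by
  rw [List.getElem?_zipWith, h₁, h₂]

lemma mem_flatten_zipWith {α β γ : Type*} {f : α → β → List γ} {l₁ : List α} {l₂ : List β}
    {i : ℕ} {a : α} {b : β} (h₁ : l₁[i]? = some a) (h₂ : l₂[i]? = some b)
    {x : γ} (hx : x ∈ f a b) : x ∈ (List.zipWith f l₁ l₂).flatten := by
  rw [List.mem_flatten]
  exact ⟨f a b, List.mem_of_getElem? (getElem?_zipWith_of h₁ h₂), hx⟩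

lemma of_mem_flatten_zipWith {α β γ : Type*} {f : α → β → List γ} {l₁ : List α}
    {l₂ : List β} {x : γ} (hx : x ∈ (List.zipWith f l₁ l₂).flatten) :
    ∃ (i : ℕ) (a : α) (b : β), l₁[i]? = some a ∧ l₂[i]? = some b ∧ x ∈ f a b := by
  rw [List.mem_flatten] at hx
  obtain ⟨l, hl, hxl⟩ := hx
  obtain ⟨i, hi⟩ := List.mem_iff_getElem?.1 hl
  obtain ⟨a, b, h₁, h₂, rfl⟩ := getElem?_zipWith_some hi
  exact ⟨i, a, b, h₁, h₂, hxl⟩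

end Aux
section Aux2

variable {V A L : Type*}

lemma funOn_eq {α β : Type*} {R : Set (α × β)} {D : Set α} (h : IsFunctionOn R D)
    {x : α} {y₁ y₂ : β} (hx : x ∈ D) (h1 : (x, y₁) ∈ R) (h2 : (x, y₂) ∈ R) : y₁ = y₂ :=
  (h.2 x hx).unique h1 h2

/-- The graph properties needed for determinism of `TES`. -/
structure DNice (g : PreGraph V A L) : Prop where
  disj : Disjoint g.Tk g.Cf
  incFun : IsFunctionOn g.inc g.Arr
  iaFun : IsFunctionOn g.ia g.Arr
  bip : ∀ a v w, (a, (v, w)) ∈ g.inc → (v ∈ g.Tk ∧ w ∈ g.Cf) ∨ (v ∈ g.Cf ∧ w ∈ g.Tk)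
  uni : UniStructured g

/-- The graph properties of the graph of a construction needed below. -/
structure Nice (g : PreGraph V A L) extends DNice g : Prop where
  clFun : IsFunctionOn g.cl g.Cf
  cfIn : ∀ u ∈ g.Cf, ∃ b, b ∈ g.Arr ∧ ∃ w, (b, (w, u)) ∈ g.inc
  cfOut : ∀ u ∈ g.Cf, ∀ b ∈ g.Arr, ∀ b' ∈ g.Arr, ∀ x y,
    (b, (u, x)) ∈ g.inc → (b', (u, y)) ∈ g.inc → b = b'

lemma DNice.src_cf {g : PreGraph V A L} (hN : DNice g) {a : A} {u x : V}
    (h : (a, (u, x)) ∈ g.inc) (hx : x ∈ g.Tk) : u ∈ g.Cf := by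
  rcases hN.bip a u x h with ⟨_, hxc⟩ | ⟨huc, _⟩
  · exact absurd hx (Set.disjoint_right.1 hN.disj hxc)
  · exact huc

lemma DNice.tgt_tk {g : PreGraph V A L} (hN : DNice g) {b : A} {s u : V}
    (h : (b, (s, u)) ∈ g.inc) (hu : u ∈ g.Cf) : s ∈ g.Tk := by
  rcases hN.bip b s u h with ⟨hst, _⟩ | ⟨_, hut⟩
  · exact hst
  · exact absurd hu (Set.disjoint_left.1 hN.disj hut)

/-! #### chains -/

lemma chainIn_mono {g g' : PreGraph V A L} (hsub : g'.Subgraph g) :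
    ∀ {l : List A} {s t : V}, ChainIn g' l s t → ChainIn g l s t := by
  intro l
  induction l with
  | nil => intro s t h; exact h
  | cons a l ih =>
    rintro s t ⟨ha, m, hm, hch⟩
    exact ⟨hsub.2.2.1 ha, m, hsub.2.2.2.1 hm, ih hch⟩

lemma chainIn_append {g : PreGraph V A L} :
    ∀ {l₁ l₂ : List A} {s m t : V}, ChainIn g l₁ s m → ChainIn g l₂ m t →
      ChainIn g (l₁ ++ l₂) s t := by
  intro l₁
  induction l₁ with
  | nil => intro l₂ s m t h₁ h₂; cases h₁; exact h₂
  | cons a l₁ ih =>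
    rintro l₂ s m t ⟨ha, m', hm', hch⟩ h₂
    exact ⟨ha, m', hm', ih hch h₂⟩

lemma chainIn_last {g : PreGraph V A L} :
    ∀ {l : List A} {s t : V}, ChainIn g l s t → l ≠ [] →
      ∃ b w, b ∈ l ∧ (b, (w, t)) ∈ g.inc := by
  intro l
  induction l with
  | nil => intro s t _ h; exact absurd rfl h
  | cons a l ih =>
    rintro s t ⟨ha, m, hm, hch⟩ -
    cases l with
    | nil => cases hch; exact ⟨a, s, by simp, hm⟩
    | cons b l' =>
      obtain ⟨b₀, w, hb₀, hw⟩ := ih hch (by simp)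
      exact ⟨b₀, w, by simp [hb₀], hw⟩

/-- No arrow of a chain ending at a token may point into a configurator `u`
whose (unique) outgoing arrow is not on the chain. -/
lemma no_in_chain {g : PreGraph V A L} (hN : Nice g) {u : V} {a : A} {y : V}
    (hu : u ∈ g.Cf) (haArr : a ∈ g.Arr) (hainc : (a, (u, y)) ∈ g.inc) :
    ∀ {l : List A} {s tfin : V}, ChainIn g l s tfin → tfin ∈ g.Tk → a ∉ l →
      ∀ b ∈ l, ∀ w, (b, (w, u)) ∈ g.inc → False := by
  intro l
  induction l with
  | nil => intro s tfin _ _ _ b hb; simp at hb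
  | cons c rest ih =>
    rintro s tfin ⟨hcArr, m, hcm, hch⟩ htfin hal b hb w hbinc
    rcases List.mem_cons.1 hb with rfl | hb
    · have := funOn_eq hN.incFun hcArr hcm hbinc
      have hm : m = u := (Prod.mk.injEq _ _ _ _ ▸ this).2
      rw [hm] at hch
      cases rest with
      | nil =>
        have hut : u = tfin := hch
        exact (Set.disjoint_right.1 hN.disj (hut ▸ hu)) htfin
      | cons d rest' =>
        obtain ⟨hdArr, m', hdm', _⟩ := hch
        have : d = a := hN.cfOut u hu d hdArr a haArr m' y hdm' hainc
        exact hal (by simp [← this])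
    · exact ih hch htfin (fun hal' => hal (by simp [hal'])) b hb w hbinc

/-! #### InArrowSeq uniqueness and lifting -/

lemma inArrowSeq_getElem? {g : PreGraph V A L} (hia : IsFunctionOn g.ia g.Arr)
    {u : V} {l : List A} (h : InArrowSeq g u l) {b : A} {n : ℕ}
    (hb : b ∈ l) (hbn : (b, n + 1) ∈ g.ia) (hbArr : b ∈ g.Arr) : l[n]? = some b := by
  obtain ⟨k, hk⟩ := List.mem_iff_getElem?.1 hb
  have hk' : (b, k + 1) ∈ g.ia := h.2.2 k b hk
  have hnk : n = k := by
    have : n + 1 = k + 1 := funOn_eq hia hbArr hbn hk'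
    omega
  rw [hnk]; exact hk

lemma inArrowSeq_unique {g : PreGraph V A L} (hia : IsFunctionOn g.ia g.Arr)
    {u : V} {l₁ l₂ : List A} (h₁ : InArrowSeq g u l₁) (h₂ : InArrowSeq g u l₂) :
    l₁ = l₂ := by
  apply List.ext_getElem?
  intro n
  cases hn₁ : l₁[n]? with
  | some b =>
    have hb : b ∈ l₁ := List.mem_of_getElem? hn₁
    have hbp := (h₁.2.1 b).1 hb
    have hb₂ : b ∈ l₂ := (h₂.2.1 b).2 hbp
    exact (inArrowSeq_getElem? hia h₂ hb₂ (h₁.2.2 n b hn₁) hbp.1).symm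
  | none =>
    cases hn₂ : l₂[n]? with
    | none => rfl
    | some b =>
      have hb : b ∈ l₂ := List.mem_of_getElem? hn₂
      have hbp := (h₂.2.1 b).1 hb
      have hb₁ : b ∈ l₁ := (h₁.2.1 b).2 hbp
      have := inArrowSeq_getElem? hia h₁ hb₁ (h₂.2.2 n b hn₂) hbp.1
      rw [hn₁] at this
      exact absurd this (by simp)

end Aux2
section Aux3

variable {V A L : Type*}

/-- In-arrows of `u` in the neighbourhood of `u` are exactly its in-arrows in `g`. -/
lemma nh_in_iff (g : PreGraph V A L) (u b' : V) (b : A) :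
    (b ∈ (g.Nh u).Arr ∧ ∃ w, (b, (w, u)) ∈ (g.Nh u).inc) ↔
      (b ∈ g.Arr ∧ ∃ w, (b, (w, u)) ∈ g.inc) := by
  constructor
  · rintro ⟨⟨hbArr, -⟩, w, hw, -⟩
    exact ⟨hbArr, w, hw⟩
  · rintro ⟨hbArr, w, hw⟩
    have hinc : b ∈ g.incidentArrows u := ⟨hbArr, w, Or.inl hw⟩
    exact ⟨⟨hbArr, hinc⟩, w, hw, hinc⟩

lemma inArrowSeq_of_nh {g : PreGraph V A L} {u : V} {l : List A}
    (h : InArrowSeq (g.Nh u) u l) : InArrowSeq g u l := by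
  obtain ⟨hnd, hmem, hidx⟩ := h
  refine ⟨hnd, fun b => (hmem b).trans (nh_in_iff g u u b), fun i b hib => (hidx i b hib).1⟩

/-- Extracting the configuration data of a configurator, phrased in `g` itself. -/
lemma cfg_data {Ty : Set L} {le : Set (L × L)} {C : Set L} {sig : Set (L × (List L × L))}
    {g : PreGraph V A L} (hSG : IsStructureGraph Ty le C sig g) {u : V} (hu : u ∈ g.Cf) :
    ∃ c ins out, (u, c) ∈ g.cl ∧ c ∈ C ∧ (c, (ins, out)) ∈ sig ∧
      (∃ ars, InArrowSeq g u ars ∧ ars.length = ins.length) ∧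
      (∀ b ∈ g.Arr, ∀ b' ∈ g.Arr, ∀ x y,
        (b, (u, x)) ∈ g.inc → (b', (u, y)) ∈ g.inc → b = b') := by
  obtain ⟨c, ins, out, hcl, hC, hsig, hcfg⟩ := hSG.2.2 u hu
  obtain ⟨-, -, -, -, huniq, -, ars, hars, hlen, -⟩ := hcfg
  refine ⟨c, ins, out, hcl, hC, hsig, ⟨ars, inArrowSeq_of_nh hars, hlen⟩, ?_⟩
  intro b hbArr b' hbArr' x y hb hb'
  have hbNh : b ∈ (g.Nh u).Arr ∧ ∃ w, (b, (u, w)) ∈ (g.Nh u).inc := by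
    have hinc : b ∈ g.incidentArrows u := ⟨hbArr, x, Or.inr hb⟩
    exact ⟨⟨hbArr, hinc⟩, x, hb, hinc⟩
  have hbNh' : b' ∈ (g.Nh u).Arr ∧ ∃ w, (b', (u, w)) ∈ (g.Nh u).inc := by
    have hinc : b' ∈ g.incidentArrows u := ⟨hbArr', y, Or.inr hb'⟩
    exact ⟨⟨hbArr', hinc⟩, y, hb', hinc⟩
  obtain ⟨a₀, -, ha₀⟩ := huniq
  rw [ha₀ b hbNh, ha₀ b' hbNh']

/-- A construction graph in a construction space satisfies all the `Nice` properties. -/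
lemma nice_of_construction {Cs : CSpace V A L} (hCs : IsCSpace Cs)
    {g : PreGraph V A L} {t : V} (hc : IsConstruction Cs g t) : Nice g := by
  have hSG := hc.2.1
  have hG : IsGraph g := hSG.1
  refine ⟨⟨hG.1, hG.2.1, hG.2.2.2.1, hG.2.2.1, hc.2.2.2.2.2.1⟩, hG.2.2.2.2.2, ?_, ?_⟩
  · -- cfIn
    intro u hu
    obtain ⟨c, ins, out, hcl, hC, hsig, ⟨ars, hars, hlen⟩, -⟩ := cfg_data hSG hu
    have hne : ins ≠ [] := (hCs.2.2.2.1 c ins out hsig).1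
    have : ars ≠ [] := by
      intro h; rw [h] at hlen; exact hne (List.eq_nil_of_length_eq_zero hlen.symm)
    obtain ⟨b, hb⟩ := List.exists_mem_of_ne_nil ars this
    obtain ⟨hbArr, w, hw⟩ := (hars.2.1 b).1 hb
    exact ⟨b, hbArr, w, hw⟩
  · -- cfOut
    intro u hu
    obtain ⟨c, ins, out, hcl, hC, hsig, -, hout⟩ := cfg_data hSG hu
    exact hout

/-- An `InArrowSeq` of a configurator of `g'` is also one in `g`. -/
lemma inArrowSeq_lift {Cs : CSpace V A L} (hCs : IsCSpace Cs)
    {g g' : PreGraph V A L} {t t' : V}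
    (hc : IsConstruction Cs g t) (hc' : IsConstruction Cs g' t')
    (hsub : g'.Subgraph g) {u : V} {ars : List A}
    (hu : u ∈ g'.Cf) (h : InArrowSeq g' u ars) : InArrowSeq g u ars := by
  have hGg : IsGraph g := hc.2.1.1
  have hGg' : IsGraph g' := hc'.2.1.1
  have huG : u ∈ g.Cf := hsub.2.1 hu
  obtain ⟨c, ins, out, hcl, hC, hsig, ⟨ars₀, hars₀, hlen₀⟩, -⟩ := cfg_data hc.2.1 huG
  obtain ⟨c', ins', out', hcl', hC', hsig', ⟨ars₀', hars₀', hlen₀'⟩, -⟩ := cfg_data hc'.2.1 hu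
  -- c = c'
  have hcc : c = c' := funOn_eq hGg.2.2.2.2.2 huG hcl (hsub.2.2.2.2.2.2 hcl')
  -- ins = ins'
  have hins : ins = ins' := by
    have := funOn_eq hCs.2.2.1 hC hsig (hcc ▸ hsig')
    exact (Prod.mk.injEq _ _ _ _ ▸ this).1
  -- ars = ars₀' (in g')
  have hii : ars = ars₀' := inArrowSeq_unique hGg'.2.2.2.1 h hars₀'
  have hlen : ars₀.length = ars.length := by rw [hii, hlen₀, hlen₀', hins]
  -- ars₀ = ars positionwise
  have : ars₀ = ars := by
    apply List.ext_getElem?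
    intro n
    cases hn : ars[n]? with
    | some b =>
      have hb : b ∈ ars := List.mem_of_getElem? hn
      obtain ⟨hbArr', w, hw⟩ := (h.2.1 b).1 hb
      have hb₀ : b ∈ ars₀ := (hars₀.2.1 b).2 ⟨hsub.2.2.1 hbArr', w, hsub.2.2.2.1 hw⟩
      have hidx : (b, n + 1) ∈ g.ia := hsub.2.2.2.2.1 (h.2.2 n b hn)
      exact inArrowSeq_getElem? hGg.2.2.2.1 hars₀ hb₀ hidx (hsub.2.2.1 hbArr')
    | none =>
      have : ars.length ≤ n := by
        by_contra hlt
        push_neg at hlt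
        rw [List.getElem?_eq_getElem hlt] at hn
        cases hn
      exact List.getElem?_eq_none (by omega)
  rw [← this]
  exact hars₀

end Aux3
section Aux4

variable {V A L : Type*}

/-- Every trail in a trail extension sequence targets the source of the extended trail. -/
lemma tes_tgt {g : PreGraph V A L} {T : Trail V A} {S : List (Trail V A)}
    (h : TES g T S) : ∀ e ∈ S, e.tgt = T.src := by
  induction h with
  | nonext tr h => intro e he; rw [List.mem_singleton] at he; rw [he]
  | ext tr a u ars Ss hext hinc hars hlen hrec ih =>
    intro e he
    obtain ⟨i, ai, Si, h₁, h₂, hmem⟩ := of_mem_flatten_zipWith he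
    obtain ⟨x, -, rfl⟩ := List.mem_map.1 hmem
    rfl

/-- Invariant propagation through one extension step. -/
lemma step_inv {g : PreGraph V A L} (hN : Nice g) {T : Trail V A} {a : A} {u : V}
    {ars : List A}
    (hext : ExtendableBy g T a) (hinc : (a, (u, T.src)) ∈ g.inc) (hars : InArrowSeq g u ars)
    (hsrc : T.src ∈ g.Tk) (htgt : T.tgt ∈ g.Tk)
    (hch : ChainIn g T.arrows T.src T.tgt) (hnd : T.arrows.Nodup) :
    u ∈ g.Cf ∧ ∀ ai ∈ ars, ∀ si, (ai, (si, u)) ∈ g.inc →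
      si ∈ g.Tk ∧ ChainIn g (ai :: a :: T.arrows) si T.tgt ∧
        (ai :: a :: T.arrows).Nodup := by
  have hu : u ∈ g.Cf := hN.src_cf hinc hsrc
  refine ⟨hu, fun ai hai si hsi => ?_⟩
  obtain ⟨haiArr, w, hw⟩ := (hars.2.1 ai).1 hai
  have hsiTk : si ∈ g.Tk := hN.tgt_tk hsi hu
  have hchain : ChainIn g (ai :: a :: T.arrows) si T.tgt :=
    ⟨haiArr, u, hsi, hext.1, T.src, hinc, hch⟩
  have hne : ai ≠ a := by
    intro h
    rw [h] at hsi
    have := funOn_eq hN.incFun hext.1 hsi hinc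
    have : si = u := (Prod.mk.injEq _ _ _ _ ▸ this).1
    rw [this] at hsiTk
    exact (Set.disjoint_left.1 hN.disj hsiTk) hu
  have hainotin : ai ∉ T.arrows := by
    intro hmem
    exact no_in_chain hN hu hext.1 hinc hch htgt hext.2.1 ai hmem si hsi
  refine ⟨hsiTk, hchain, ?_⟩
  rw [List.nodup_cons, List.nodup_cons]
  exact ⟨by simp [hne, hainotin], hext.2.1, hnd⟩

/-- Structural facts about the trails produced by `TES`. -/
lemma tes_prod {g : PreGraph V A L} (hN : Nice g) {T : Trail V A} {S : List (Trail V A)}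
    (h : TES g T S) :
    T.src ∈ g.Tk → T.tgt ∈ g.Tk → ChainIn g T.arrows T.src T.tgt → T.arrows.Nodup →
    ∀ e ∈ S, e.src ∈ g.Tk ∧ ChainIn g e.arrows e.src T.src ∧
      (e.arrows ++ T.arrows).Nodup := by
  induction h with
  | nonext tr h =>
    intro hsrc htgt hch hnd e he
    rw [List.mem_singleton] at he
    subst he
    exact ⟨hsrc, rfl, by simpa using hnd⟩
  | ext tr a u ars Ss hext hinc hars hlen hrec ih =>
    intro hsrc htgt hch hnd e he
    obtain ⟨i, ai, Si, h₁, h₂, hmem⟩ := of_mem_flatten_zipWith he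
    obtain ⟨x, hx, rfl⟩ := List.mem_map.1 hmem
    have hai : ai ∈ ars := List.mem_of_getElem? h₁
    obtain ⟨haiArr, si, hsi⟩ := (hars.2.1 ai).1 hai
    have hstep := (step_inv hN hext hinc hars hsrc htgt hch hnd).2 ai hai si hsi
    have ihx := ih i ai si Si h₁ h₂ hsi hstep.1 htgt hstep.2.1 hstep.2.2 x hx
    refine ⟨ihx.1, ?_, ?_⟩
    · exact chainIn_append ihx.2.1 ⟨haiArr, u, hsi, hext.1, tr.src, hinc, rfl⟩
    · have := ihx.2.2
      simpa using this

/-- Trail extension sequences are nonempty. -/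
lemma lt_of_getElem?_some {α : Type*} {l : List α} {i : ℕ} {x : α}
    (h : l[i]? = some x) : i < l.length := by
  by_contra h'
  push_neg at h'
  rw [List.getElem?_eq_none h'] at h
  cases h

lemma tes_ne {g : PreGraph V A L} (hN : Nice g) {T : Trail V A} {S : List (Trail V A)}
    (h : TES g T S) : T.src ∈ g.Tk → S ≠ [] := by
  induction h with
  | nonext tr h => intro _; simp
  | ext tr a u ars Ss hext hinc hars hlen hrec ih =>
    intro hsrc
    have hu : u ∈ g.Cf := hN.src_cf hinc hsrc
    obtain ⟨b, hbArr, w, hw⟩ := hN.cfIn u hu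
    have hb : b ∈ ars := (hars.2.1 b).2 ⟨hbArr, w, hw⟩
    obtain ⟨i₀, hi₀⟩ := List.mem_iff_getElem?.1 hb
    have hlt : i₀ < Ss.length := by
      have := lt_of_getElem?_some hi₀
      omega
    have h₂ : Ss[i₀]? = some (Ss[i₀]'hlt) := List.getElem?_eq_getElem hlt
    have hne₁ : Ss[i₀]'hlt ≠ [] := ih i₀ b w _ hi₀ h₂ hw (hN.tgt_tk hw hu)
    obtain ⟨x, hx⟩ := List.exists_mem_of_ne_nil _ hne₁
    exact List.ne_nil_of_mem (mem_flatten_zipWith hi₀ h₂ (List.mem_map_of_mem hx))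

end Aux4
section Aux5

variable {V A L : Type*}

/-- Determinism of `TES` on uni-structured graphs. -/
lemma tes_det {g : PreGraph V A L} (hN : DNice g) {T : Trail V A} {S : List (Trail V A)}
    (h : TES g T S) : T.src ∈ g.Tk → ∀ S', TES g T S' → S = S' := by
  induction h with
  | nonext tr hne =>
    intro hsrc S' h'
    cases h' with
    | nonext _ _ => rfl
    | ext _ a' u' ars' Ss' hext' hinc' hars' hlen' hrec' => exact absurd ⟨a', hext'⟩ hne
  | ext tr a u ars Ss hext hinc hars hlen hrec ih =>
    intro hsrc S' h'
    cases h' with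
    | nonext _ hne => exact absurd ⟨a, hext⟩ hne
    | ext _ a' u' ars' Ss' hext' hinc' hars' hlen' hrec' =>
      -- a = a'
      have haa : a = a' :=
        hN.uni tr.src hsrc a hext.1 a' hext'.1 ⟨u, hinc⟩ ⟨u', hinc'⟩
      subst haa
      -- u = u'
      have huu : u = u' := by
        have := funOn_eq hN.incFun hext.1 hinc hinc'
        exact (Prod.mk.injEq _ _ _ _ ▸ this).1
      subst huu
      -- ars = ars'
      have haa' : ars = ars' := inArrowSeq_unique hN.iaFun hars hars'
      subst haa'
      -- Ss = Ss'
      have hu : u ∈ g.Cf := hN.src_cf hinc hsrc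
      have hSS : Ss = Ss' := by
        apply List.ext_getElem?
        intro n
        by_cases hn : n < ars.length
        · have hn₁ : n < Ss.length := by omega
          have hn₂ : n < Ss'.length := by omega
          have ha : ars[n]? = some (ars[n]'hn) := List.getElem?_eq_getElem hn
          have hS₁ : Ss[n]? = some (Ss[n]'hn₁) := List.getElem?_eq_getElem hn₁
          have hS₂ : Ss'[n]? = some (Ss'[n]'hn₂) := List.getElem?_eq_getElem hn₂
          obtain ⟨haArr, si, hsi⟩ := (hars.2.1 _).1 (List.mem_of_getElem? ha)
          have := ih n _ si _ ha hS₁ hsi (hN.tgt_tk hsi hu) _ (hrec' n _ si _ ha hS₂ hsi)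
          rw [hS₁, hS₂, this]
        · rw [List.getElem?_eq_none (by omega : Ss.length ≤ n),
            List.getElem?_eq_none (by omega : Ss'.length ≤ n)]
      rw [hSS]

end Aux5
section Aux6

variable {V A L : Type*}

lemma dnice_trGraph {g : PreGraph V A L} (hN : DNice g) (TR : List (Trail V A)) :
    DNice (trGraph g TR) := by
  constructor
  · exact hN.disj.mono Set.inter_subset_left Set.inter_subset_left
  · constructor
    · rintro p ⟨hp, hpAs⟩
      exact ⟨hN.incFun.1 p hp, hpAs⟩
    · rintro x ⟨hxArr, hxAs⟩
      obtain ⟨y, hy, huniq⟩ := hN.incFun.2 x hxArr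
      exact ⟨y, ⟨hy, hxAs⟩, fun y' hy' => huniq y' hy'.1⟩
  · constructor
    · rintro p ⟨hp, hpAs⟩
      exact ⟨hN.iaFun.1 p hp, hpAs⟩
    · rintro x ⟨hxArr, hxAs⟩
      obtain ⟨y, hy, huniq⟩ := hN.iaFun.2 x hxArr
      exact ⟨y, ⟨hy, hxAs⟩, fun y' hy' => huniq y' hy'.1⟩
  · rintro a v w ⟨hp, hpAs⟩
    have hvV : v ∈ trailVertexSet g TR := Or.inl ⟨a, hpAs, w, Or.inl hp⟩
    have hwV : w ∈ trailVertexSet g TR := Or.inl ⟨a, hpAs, v, Or.inr hp⟩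
    rcases hN.bip a v w hp with ⟨h₁, h₂⟩ | ⟨h₁, h₂⟩
    · exact Or.inl ⟨⟨h₁, hvV⟩, h₂, hwV⟩
    · exact Or.inr ⟨⟨h₁, hvV⟩, h₂, hwV⟩
  · rintro x ⟨hxTk, -⟩ a ⟨haArr, -⟩ b ⟨hbArr, -⟩ ⟨w₁, hw₁, -⟩ ⟨w₂, hw₂, -⟩
    exact hN.uni x hxTk a haArr b hbArr ⟨w₁, hw₁⟩ ⟨w₂, hw₂⟩

/-- The restriction lemma: a `TES` computed in `g` is also computed, with the extended
trail cut down to its fresh part, in the graph of the full trail sequence. -/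
lemma tes_restrict {g : PreGraph V A L} (hN : Nice g) (Sfull : List (Trail V A))
    {T : Trail V A} {S : List (Trail V A)} (h : TES g T S) :
    T.src ∈ g.Tk → T.tgt ∈ g.Tk → ChainIn g T.arrows T.src T.tgt → T.arrows.Nodup →
    ∀ (P W : List A), T.arrows = P ++ W →
    (∀ b ∈ W, b ∉ trailArrowSet Sfull) →
    (∀ e ∈ S, ∀ b ∈ e.arrows, b ∈ trailArrowSet Sfull) →
    ∀ w : V, TES (trGraph g Sfull) ⟨P, T.src, w⟩ S := by
  induction h with
  | nonext tr hne =>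
    intro hsrc htgt hch hnd P W hPW hW hS w
    exact TES.nonext ⟨P, tr.src, w⟩ (by
      rintro ⟨b, ⟨hbArr, hbAS⟩, hbP, x, hbinc, -⟩
      by_cases hbtr : b ∈ tr.arrows
      · rw [hPW] at hbtr
        rcases List.mem_append.1 hbtr with hb | hb
        · exact hbP hb
        · exact hW b hb hbAS
      · exact hne ⟨b, hbArr, hbtr, x, hbinc⟩)
  | ext tr a u ars Ss hext hinc hars hlen hrec ih =>
    intro hsrc htgt hch hnd P W hPW hW hS w
    have hu : u ∈ g.Cf := hN.src_cf hinc hsrc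
    have hstep := step_inv hN hext hinc hars hsrc htgt hch hnd
    -- each referenced arrow is an arrow of `Sfull`
    have hblocks : ∀ (i : ℕ) (ai : A) (Si : List (Trail V A)),
        ars[i]? = some ai → Ss[i]? = some Si →
        ai ∈ trailArrowSet Sfull ∧ a ∈ trailArrowSet Sfull := by
      intro i ai Si h₁ h₂
      have hai : ai ∈ ars := List.mem_of_getElem? h₁
      obtain ⟨haiArr, si, hsi⟩ := (hars.2.1 ai).1 hai
      have hT : TES g ⟨ai :: a :: tr.arrows, si, tr.tgt⟩ Si := hrec i ai si Si h₁ h₂ hsi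
      have hne₁ : Si ≠ [] := tes_ne hN hT (hN.tgt_tk hsi hu)
      obtain ⟨e, he⟩ := List.exists_mem_of_ne_nil _ hne₁
      have hmem : (⟨e.arrows ++ [ai, a], e.src, tr.src⟩ : Trail V A) ∈
          (List.zipWith (fun ai Si => List.map
            (fun e => (⟨e.arrows ++ [ai, a], e.src, tr.src⟩ : Trail V A)) Si) ars Ss).flatten :=
        mem_flatten_zipWith h₁ h₂ (List.mem_map_of_mem he)
      have := hS _ hmem
      exact ⟨this ai (by simp), this a (by simp)⟩
    have haAS : a ∈ trailArrowSet Sfull := by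
      obtain ⟨b, hbArr, wb, hwb⟩ := hN.cfIn u hu
      have hb : b ∈ ars := (hars.2.1 b).2 ⟨hbArr, wb, hwb⟩
      obtain ⟨i₀, hi₀⟩ := List.mem_iff_getElem?.1 hb
      have hlt : i₀ < Ss.length := by
        have := lt_of_getElem?_some hi₀; omega
      exact (hblocks i₀ b _ hi₀ (List.getElem?_eq_getElem hlt)).2
    have haiAS : ∀ b ∈ ars, b ∈ trailArrowSet Sfull := by
      intro b hb
      obtain ⟨i₀, hi₀⟩ := List.mem_iff_getElem?.1 hb
      have hlt : i₀ < Ss.length := by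
        have := lt_of_getElem?_some hi₀; omega
      exact (hblocks i₀ b _ hi₀ (List.getElem?_eq_getElem hlt)).1
    -- now build the TES in the restricted graph
    refine TES.ext ⟨P, tr.src, w⟩ a u ars Ss
      ⟨⟨hext.1, haAS⟩, ?_, u, hinc, haAS⟩ ⟨hinc, haAS⟩ ⟨hars.1, ?_, ?_⟩ hlen ?_
    · -- a ∉ P
      intro haP
      exact hext.2.1 (by rw [hPW]; exact List.mem_append.2 (Or.inl haP))
    · -- membership characterisation in the restricted graph
      intro b
      constructor
      · intro hb
        obtain ⟨hbArr, x, hx⟩ := (hars.2.1 b).1 hb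
        exact ⟨⟨hbArr, haiAS b hb⟩, x, hx, haiAS b hb⟩
      · rintro ⟨⟨hbArr, -⟩, x, hx, -⟩
        exact (hars.2.1 b).2 ⟨hbArr, x, hx⟩
    · -- index condition
      intro i b hib
      exact ⟨hars.2.2 i b hib, haiAS b (List.mem_of_getElem? hib)⟩
    · -- recursive calls
      intro i ai si Si h₁ h₂ hsi
      have hai : ai ∈ ars := List.mem_of_getElem? h₁
      have hstep' := hstep.2 ai hai si hsi.1
      have hSi : ∀ e ∈ Si, ∀ b ∈ e.arrows, b ∈ trailArrowSet Sfull := by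
        intro e he b hb
        have hmem : (⟨e.arrows ++ [ai, a], e.src, tr.src⟩ : Trail V A) ∈
            (List.zipWith (fun ai Si => List.map
              (fun e => (⟨e.arrows ++ [ai, a], e.src, tr.src⟩ : Trail V A)) Si) ars Ss).flatten :=
          mem_flatten_zipWith h₁ h₂ (List.mem_map_of_mem he)
        exact hS _ hmem b (by simp [hb])
      exact ih i ai si Si h₁ h₂ hsi.1 hstep'.1 htgt hstep'.2.1 hstep'.2.2
        (ai :: a :: P) W (by simp [hPW]) hW hSi w

end Aux6
section Aux7

variable {V A L : Type*}

lemma rprod_map_comm {F1 : Trail V A → Trail V A}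
    (hF : ∀ x e : Trail V A, F1 (x.append e) = x.append (F1 e)) :
    ∀ (M : List (List (Trail V A))) (Sl : List (Trail V A)),
      ((List.zipWith rprod M Sl).flatten).map F1 =
        (List.zipWith rprod M (Sl.map F1)).flatten := by
  intro M
  induction M with
  | nil => intro Sl; simp
  | cons M₀ M ih =>
    intro Sl
    cases Sl with
    | nil => simp
    | cons e₀ Sl =>
      simp only [List.zipWith_cons_cons, List.flatten_cons, List.map_cons, List.map_append]
      rw [ih]
      congr 1
      unfold rprod
      rw [List.map_map]
      exact List.map_congr_left fun x _ => hF x e₀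

lemma zmain {F : A → Trail V A → Trail V A}
    (hF : ∀ (ai : A) (x e : Trail V A), F ai (x.append e) = x.append (F ai e)) :
    ∀ (ars : List A) (Ss : List (List (Trail V A)))
      (Ms : List (List (List (Trail V A)))),
      ars.length = Ss.length →
      List.Forall₂ (fun Si Mi => Si.length = Mi.length) Ss Ms →
      (List.zipWith rprod Ms.flatten
          (List.zipWith (fun ai Si => Si.map (F ai)) ars Ss).flatten).flatten =
        (List.zipWith (fun ai Ui => Ui.map (F ai)) ars
          (List.zipWith (fun Si Mi => (List.zipWith rprod Mi Si).flatten) Ss Ms)).flatten := by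
  intro ars
  induction ars with
  | nil =>
    intro Ss Ms hlen hF₂
    have : Ss = [] := List.eq_nil_of_length_eq_zero hlen.symm
    subst this
    rcases List.forall₂_nil_left_iff.1 hF₂ with rfl
    simp
  | cons a₀ ars ih =>
    intro Ss Ms hlen hF₂
    cases Ss with
    | nil => simp at hlen
    | cons S₀ Ss =>
      cases hF₂ with
      | cons h₀ hrest =>
        rename_i M₀ Ms
        simp only [List.flatten_cons, List.zipWith_cons_cons]
        rw [List.zipWith_append (by simpa using h₀.symm)]
        simp only [List.flatten_append, List.flatten_cons]
        rw [ih Ss Ms (by simpa using hlen) hrest]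
        congr 1
        exact (rprod_map_comm (hF a₀) M₀ S₀).symm

/-- The trail-decomposition lemma: the `TES` of a trail in `g` decomposes along the
`TES` of the same trail computed in a generator `g'`. -/
lemma tes_decompose {Cs : CSpace V A L} (hCs : IsCSpace Cs) {g g' : PreGraph V A L}
    {t t' : V} (hc : IsConstruction Cs g t) (hc' : IsConstruction Cs g' t')
    (hsub : g'.Subgraph g) {T : Trail V A} {trs' : List (Trail V A)}
    (h : TES g' T trs') :
    T.src ∈ g'.Tk →
    ∀ Ss' : List (List (Trail V A)),
      List.Forall₂ (fun tri Si => TES g (tri.append T) Si) trs' Ss' →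
      TES g T (List.zipWith rprod Ss' trs').flatten := by
  have hNg : Nice g := nice_of_construction hCs hc
  have hNg' : Nice g' := nice_of_construction hCs hc'
  induction h with
  | nonext tr hne =>
    intro hsrc Ss' hF
    cases hF with
    | cons hP hnil =>
      rcases List.forall₂_nil_left_iff.1 hnil with rfl
      rename_i S₁
      have hTr : (⟨[], tr.src, tr.src⟩ : Trail V A).append tr = tr := rfl
      rw [hTr] at hP
      have hrp : rprod S₁ ⟨[], tr.src, tr.src⟩ = S₁ := by
        unfold rprod
        have : ∀ e ∈ S₁, e.append ⟨[], tr.src, tr.src⟩ = e := by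
          intro e he
          have := tes_tgt hP e he
          show (⟨e.arrows ++ [], e.src, tr.src⟩ : Trail V A) = e
          rw [List.append_nil, ← this]
        rw [List.map_congr_left this]; exact List.map_id _
      simpa [hrp] using hP
  | ext tr a u ars Ss hext hinc hars hlen hrec ih =>
    intro hsrc Ss' hF
    have hu' : u ∈ g'.Cf := hNg'.src_cf hinc hsrc
    have harsg : InArrowSeq g u ars := inArrowSeq_lift hCs hc hc' hsub hu' hars
    obtain ⟨Ms, rfl, hMs⟩ := forall₂_flatten_split hF
    -- lengths
    have hlenSsMs : List.Forall₂ (fun Si Mi => Si.length = Mi.length) Ss Ms := by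
      have hl : (List.zipWith (fun ai Si => List.map
          (fun e => (⟨e.arrows ++ [ai, a], e.src, tr.src⟩ : Trail V A)) Si) ars Ss).length
          = Ms.length := hMs.length_eq
      have hzl : (List.zipWith (fun ai Si => List.map
          (fun e => (⟨e.arrows ++ [ai, a], e.src, tr.src⟩ : Trail V A)) Si) ars Ss).length
          = Ss.length := by simp; omega
      refine forall₂_of_getElem? (by omega) ?_
      intro i Si Mi h₁ h₂
      have hia : i < ars.length := by
        have := lt_of_getElem?_some h₁; omega
      have ha : ars[i]? = some (ars[i]'hia) := List.getElem?_eq_getElem hia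
      have hzi : (List.zipWith (fun ai Si => List.map
          (fun e => (⟨e.arrows ++ [ai, a], e.src, tr.src⟩ : Trail V A)) Si) ars Ss)[i]? =
          some (List.map (fun e => (⟨e.arrows ++ [ars[i]'hia, a], e.src, tr.src⟩ : Trail V A))
            Si) := getElem?_zipWith_of ha h₁
      have := (forall₂_getElem? hMs hzi h₂).length_eq
      simpa using this
    -- the recursive TES facts in `g`
    have hUs : ∀ (i : ℕ) (ai : A) (si : V) (Si : List (Trail V A))
        (Mi : List (List (Trail V A))),
        ars[i]? = some ai → Ss[i]? = some Si → Ms[i]? = some Mi →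
        (ai, (si, u)) ∈ g'.inc →
        TES g ⟨ai :: a :: tr.arrows, si, tr.tgt⟩ (List.zipWith rprod Mi Si).flatten := by
      intro i ai si Si Mi h₁ h₂ h₃ hsi
      have hsiTk : si ∈ g'.Tk := hNg'.toDNice.tgt_tk hsi hu'
      apply ih i ai si Si h₁ h₂ hsi hsiTk
      -- Forall₂ for the block
      have hzi : (List.zipWith (fun ai Si => List.map
          (fun e => (⟨e.arrows ++ [ai, a], e.src, tr.src⟩ : Trail V A)) Si) ars Ss)[i]? =
          some (List.map (fun e => (⟨e.arrows ++ [ai, a], e.src, tr.src⟩ : Trail V A)) Si) :=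
        getElem?_zipWith_of h₁ h₂
      have hblock := forall₂_getElem? hMs hzi h₃
      rw [List.forall₂_map_left_iff] at hblock
      refine hblock.imp ?_
      intro e Sj hTe
      have heq : (⟨e.arrows ++ [ai, a], e.src, tr.src⟩ : Trail V A).append tr =
          e.append ⟨ai :: a :: tr.arrows, si, tr.tgt⟩ := by
        show (⟨(e.arrows ++ [ai, a]) ++ tr.arrows, e.src, tr.tgt⟩ : Trail V A) = _
        simp [Trail.append]
      rwa [heq] at hTe
    -- apply the extension rule in `g`
    have hexg : ExtendableBy g tr a := ⟨hsub.2.2.1 hext.1, hext.2.1, u, hsub.2.2.2.1 hinc⟩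
    have hmain := TES.ext tr a u ars
      (List.zipWith (fun Si Mi => (List.zipWith rprod Mi Si).flatten) Ss Ms)
      hexg (hsub.2.2.2.1 hinc) harsg
      (by
        have := hlenSsMs.length_eq
        simp [hlen]
        omega)
      (by
        intro i ai si Ui h₁ h₂ hsi
        obtain ⟨Si, Mi, hS, hM, rfl⟩ := getElem?_zipWith_some h₂
        have hai : ai ∈ ars := List.mem_of_getElem? h₁
        obtain ⟨haiArr', si', hsi'⟩ := (hars.2.1 ai).1 hai
        have : si = si' := by
          have := funOn_eq hNg.incFun (hsub.2.2.1 haiArr') hsi (hsub.2.2.2.1 hsi')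
          exact (Prod.mk.injEq _ _ _ _ ▸ this).1
        subst this
        exact hUs i ai si Si Mi h₁ hS hM hsi')
    -- massage the list
    have hkey := zmain (F := fun ai e => ⟨e.arrows ++ [ai, a], e.src, tr.src⟩)
      (by
        intro ai x e
        show (⟨(x.arrows ++ e.arrows) ++ [ai, a], x.src, tr.src⟩ : Trail V A) = _
        simp [Trail.append])
      ars Ss Ms hlen.symm hlenSsMs
    rw [hkey]
    exact hmain

end Aux7
/-- a split of a construction determines its complete trail sequence:
`CTS(g, t) = (CTS(ic(tr1)) ◁ tr1) ⊕ ⋯ ⊕ (CTS(ic(trn)) ◁ trn)`. -/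
theorem split_preserves_complete_trail_sequence {V A L : Type*}
    (Cs : CSpace V A L) (hCs : IsCSpace Cs)
    (g : PreGraph V A L) (t : V) (hc : IsConstruction Cs g t)
    (g' : PreGraph V A L) (hc' : IsConstruction Cs g' t) (hsub : g'.Subgraph g)
    (trs : List (Trail V A)) (hgen : TES g' (Trail.nil t) trs)
    (Ss Cis : List (List (Trail V A)))
    (hSlen : Ss.length = trs.length) (hClen : Cis.length = trs.length)
    (hTES : ∀ (i : ℕ) (tri : Trail V A) (Si : List (Trail V A)),
        trs[i]? = some tri → Ss[i]? = some Si → TES g tri Si)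
    (hCTSic : ∀ (i : ℕ) (tri : Trail V A) (Si Ci : List (Trail V A)),
        trs[i]? = some tri → Ss[i]? = some Si → Cis[i]? = some Ci →
        TES (trGraph g Si) (Trail.nil tri.src) Ci)
    (S : List (Trail V A)) (hCTS : TES g (Trail.nil t) S) :
    S = (List.zipWith rprod Cis trs).flatten := by
  have hNg : Nice g := nice_of_construction hCs hc
  have hNg' : Nice g' := nice_of_construction hCs hc'
  have htTk' : t ∈ g'.Tk := hc'.2.2.2.2.2.2.1
  have htTk : t ∈ g.Tk := hc.2.2.2.2.2.2.1
  have htgt : ∀ tri ∈ trs, tri.tgt = t := tes_tgt hgen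
  have hprod := tes_prod hNg' hgen htTk' htTk' rfl List.nodup_nil
  -- `Cis = Ss`
  have hCS : Cis = Ss := by
    apply List.ext_getElem?
    intro n
    by_cases hn : n < trs.length
    · have hnS : n < Ss.length := by omega
      have hnC : n < Cis.length := by omega
      have htr : trs[n]? = some (trs[n]'hn) := List.getElem?_eq_getElem hn
      have hS : Ss[n]? = some (Ss[n]'hnS) := List.getElem?_eq_getElem hnS
      have hC : Cis[n]? = some (Cis[n]'hnC) := List.getElem?_eq_getElem hnC
      set tri := trs[n]'hn
      set Si := Ss[n]'hnS
      set Ci := Cis[n]'hnC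
      have hT : TES g tri Si := hTES n tri Si htr hS
      have hmem : tri ∈ trs := List.mem_of_getElem? htr
      obtain ⟨hsrc', hch', hnd'⟩ := hprod tri hmem
      have hsrc : tri.src ∈ g.Tk := hsub.1 hsrc'
      have htgtt : tri.tgt = t := htgt tri hmem
      have htgtTk : tri.tgt ∈ g.Tk := by rw [htgtt]; exact htTk
      have hch : ChainIn g tri.arrows tri.src tri.tgt := by
        rw [htgtt]; exact chainIn_mono hsub hch'
      have hnd : tri.arrows.Nodup := by simpa [Trail.nil] using hnd'
      have hprod2 := tes_prod hNg hT hsrc htgtTk hch hnd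
      have hW : ∀ b ∈ tri.arrows, b ∉ trailArrowSet Si := by
        rintro b hb ⟨e, he, hbe⟩
        exact (List.disjoint_of_nodup_append (hprod2 e he).2.2) hbe hb
      have hRes : TES (trGraph g Si) ⟨[], tri.src, tri.src⟩ Si :=
        tes_restrict hNg Si hT hsrc htgtTk hch hnd [] tri.arrows (by simp) hW
          (fun e he b hb => ⟨e, he, hb⟩) tri.src
      have hSne : Si ≠ [] := tes_ne hNg hT hsrc
      have hsrcV : tri.src ∈ trailVertexSet g Si := by
        obtain ⟨e, he⟩ := List.exists_mem_of_ne_nil _ hSne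
        have hche : ChainIn g e.arrows e.src tri.src := (hprod2 e he).2.1
        cases harr : e.arrows with
        | nil =>
          right
          refine ⟨e, he, harr, ?_⟩
          rw [harr] at hche
          exact hche
        | cons b l =>
          rw [harr] at hche
          obtain ⟨b₀, w₀, hb₀, hw₀⟩ := chainIn_last hche (by simp)
          exact Or.inl ⟨b₀, ⟨e, he, by rw [harr]; exact hb₀⟩, w₀, Or.inr hw₀⟩
      have hsrcTk : (⟨[], tri.src, tri.src⟩ : Trail V A).src ∈ (trGraph g Si).Tk :=
        ⟨hsrc, hsrcV⟩
      have hCi : TES (trGraph g Si) ⟨[], tri.src, tri.src⟩ Ci :=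
        hCTSic n tri Si Ci htr hS hC
      have hSC : Si = Ci := tes_det (dnice_trGraph hNg.toDNice Si) hRes hsrcTk Ci hCi
      rw [hC, hS, hSC]
    · rw [List.getElem?_eq_none (show Cis.length ≤ n by omega),
        List.getElem?_eq_none (show Ss.length ≤ n by omega)]
  rw [hCS]
  -- the decomposition of `CTS(g, t)`
  have hF : List.Forall₂ (fun tri Si => TES g (tri.append (Trail.nil t)) Si) trs Ss := by
    refine forall₂_of_getElem? hSlen.symm ?_
    intro i tri Si h₁ h₂
    have htri : tri.append (Trail.nil t) = tri := by
      have h3 := htgt tri (List.mem_of_getElem? h₁)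
      show (⟨tri.arrows ++ [], tri.src, t⟩ : Trail V A) = tri
      rw [List.append_nil, ← h3]
    rw [htri]
    exact hTES i tri Si h₁ h₂
  have hL2 : TES g (Trail.nil t) (List.zipWith rprod Ss trs).flatten :=
    tes_decompose hCs hc hc' hsub hgen htTk' Ss hF
  exact tes_det hNg.toDNice hCTS htTk _ hL2

end RST
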